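/- The set H = {0, 2, 6, 12, 20, 26, 30, 32, 42, 56, 60, 62, 72, 74, 84, 86, 90, 96, 104, 110, 114, 116, 120, 126, 132, 134, 140, 144, 152, 156, 162, 170, 174, 176, 182, 186, 194, 200, 204, 210, 216, 222, 224, 230, 236, 240, 242, 246, 252, 254, 260, 264, 266, 270} of 54 integers is admissible: for every prime p there exists an integer n such that the product ∏_{h ∈ H} (n + h) is not divisible by p. -/

import Mathlib

/-- The 54-element tuple used to produce prime gaps of size at most 270. -/
def H54 : Finset ℤ :=
  {0, 2, 6, 12, 20, 26, 30, 32, 42, 56, 60, 62, 72, 74, 84, 86, 90, 96,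
   104, 110, 114, 116, 120, 126, 132, 134, 140, 144, 152, 156,
   162, 170, 174, 176, 182, 186, 194, 200, 204, 210, 216, 222,
   224, 230, 236, 240, 242, 246, 252, 254, 260, 264, 266, 270}

def L54 : List ℕ :=
  [0, 2, 6, 12, 20, 26, 30, 32, 42, 56, 60, 62, 72, 74, 84, 86, 90, 96,
   104, 110, 114, 116, 120, 126, 132, 134, 140, 144, 152, 156,
   162, 170, 174, 176, 182, 186, 194, 200, 204, 210, 216, 222,
   224, 230, 236, 240, 242, 246, 252, 254, 260, 264, 266, 270]

/-- Witness residues for small primes. -/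
def W54 : ℕ → ℕ
  | 2 => 1 | 3 => 2 | 5 => 2 | 7 => 4 | 11 => 8 | 13 => 2 | 17 => 7 | 19 => 3
  | 23 => 15 | 29 => 14 | 31 => 22 | 37 => 10 | 41 => 14 | 43 => 7 | 47 => 3
  | 53 => 4 | 59 => 5 | 61 => 3 | 67 => 3 | 71 => 1 | 73 => 4 | 79 => 3
  | 83 => 1 | 89 => 6 | 97 => 2 | 101 => 1 | 103 => 1 | 107 => 1 | 109 => 1
  | 113 => 1 | 127 => 3 | 131 => 1 | 137 => 1 | 139 => 1 | 149 => 1 | 151 => 1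
  | 157 => 2 | 163 => 2 | 167 => 1 | 173 => 1 | 179 => 1 | 181 => 1 | 191 => 1
  | 193 => 1 | 197 => 1 | 199 => 1 | 211 => 2 | 223 => 2 | 227 => 1 | 229 => 1
  | 233 => 1 | 239 => 1 | 241 => 2 | 251 => 1 | 257 => 1 | 263 => 1 | 269 => 1
  | 271 => 2 | _ => 0

set_option maxRecDepth 100000 in
set_option maxHeartbeats 2000000 in
lemma small_check : ∀ p < 272, p.Prime →
    (L54.map (fun h => W54 p + h)).prod % p ≠ 0 := by decide

set_option maxRecDepth 10000 in
lemma H54_eq : H54 = (L54.map (Int.ofNat)).toFinset := by decide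

set_option maxRecDepth 10000 in
lemma L54_nodup : (L54.map (Int.ofNat)).Nodup := by decide

lemma prod_eq (n : ℤ) :
    ∏ h ∈ H54, (n + h) = (L54.map (fun h => n + (h : ℤ))).prod := by
  rw [H54_eq, List.prod_toFinset _ L54_nodup, List.map_map]
  rfl

theorem H54_admissible :
    H54.card = 54 ∧
      ∀ p : ℕ, p.Prime → ∃ n : ℤ, ¬ (p : ℤ) ∣ ∏ h ∈ H54, (n + h) := by
  constructor
  · set_option maxRecDepth 10000 in decide
  · intro p hp
    rcases lt_or_ge p 272 with hsmall | hbig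
    · refine ⟨(W54 p : ℤ), ?_⟩
      have key := small_check p hsmall hp
      rw [prod_eq]
      have : (L54.map (fun h => (W54 p : ℤ) + (h : ℤ))).prod
          = ((L54.map (fun h => W54 p + h)).prod : ℕ) := by
        rw [Nat.cast_list_prod, List.map_map]
        rfl
      rw [this, Int.natCast_dvd_natCast]
      intro hdvd
      exact key (Nat.mod_eq_zero_of_dvd hdvd)
    · refine ⟨1, ?_⟩
      intro hdvd
      have hpZ : Prime ((p : ℤ)) := Nat.prime_iff_prime_int.mp hp
      obtain ⟨h, hh, hdh⟩ := hpZ.exists_mem_finset_dvd hdvd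
      have hball : ∀ x ∈ H54, (0:ℤ) ≤ x ∧ x ≤ 270 := by
        rw [H54_eq]; decide
      have hbound := hball h hh
      have hpos : 0 < 1 + h := by omega
      have := Int.le_of_dvd hpos hdh
      have : (p : ℤ) ≤ 271 := by omega
      have : (272 : ℤ) ≤ (p : ℤ) := by exact_mod_cast hbig
      omega
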